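/- On ℝ³ with coordinates (x,y,z), consider the Heisenberg frame X1 = ∂x + (y/2)∂z, X2 = ∂y − (x/2)∂z. Let g : ℝ → ℝ be C^∞ and define, on the open set Ω = {(x,y,z) : (x,y) ≠ (0,0)}, r = √(x²+y²) and f(x,y,z) = z − g(r). Then on Ω: X1f = y/2 − g'(r)x/r, X2f = −x/2 − g'(r)y/r, the quantity m := √((X1f)² + (X2f)²) equals √(r² + 4g'(r)²)/2 > 0, and the mean-curvature expression satisfies (X1(X1f) + X2(X2f))/m + (X1f)·X1(1/m) + (X2f)·X2(1/m) = −2·(4g'(r)³ + r³g''(r)) / (r·(r² + 4g'(r)²)^{3/2}). -/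

import Mathlib

lemma fderiv_apply_line (F : ℝ×ℝ×ℝ → ℝ) (p v : ℝ×ℝ×ℝ) (h : DifferentiableAt ℝ F p) :
    fderiv ℝ F p v = deriv (fun t : ℝ => F (p + t • v)) 0 := by
  have hline : HasDerivAt (fun t : ℝ => p + t • v) v 0 := by
    simpa using ((hasDerivAt_id (0:ℝ)).smul_const v).const_add p
  have hF : HasFDerivAt F (fderiv ℝ F p) (p + (0:ℝ) • v) := by
    simpa using h.hasFDerivAt
  have h2 : HasDerivAt (fun t : ℝ => F (p + t • v)) (fderiv ℝ F p v) 0 := by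
    have := hF.comp_hasDerivAt (0:ℝ) hline
    simpa [Function.comp_def] using this
  exact h2.deriv.symm

lemma curveR (x y : ℝ) (h : x^2 + y^2 ≠ 0) :
    HasDerivAt (fun t : ℝ => Real.sqrt ((x + t)^2 + y^2)) (x / Real.sqrt (x^2+y^2)) 0 := by
  have h1 : HasDerivAt (fun t : ℝ => (x + t)^2 + y^2) (2*x) 0 := by
    have := (((hasDerivAt_id (0:ℝ)).const_add x).pow 2).add_const (y^2)
    simpa using this
  have h2 := (Real.hasDerivAt_sqrt (by simpa using h)).comp 0 h1
  have heq : 1/(2*Real.sqrt ((x+0)^2+y^2)) * (2*x) = x / Real.sqrt (x^2+y^2) := by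
    rw [add_zero]; ring
  rw [← heq]
  simpa [Function.comp_def] using h2

lemma curveR2 (x y : ℝ) (h : x^2 + y^2 ≠ 0) :
    HasDerivAt (fun t : ℝ => Real.sqrt (x^2 + (y + t)^2)) (y / Real.sqrt (x^2+y^2)) 0 := by
  have h0 : y^2 + x^2 ≠ 0 := by rwa [add_comm]
  have := curveR y x h0
  have e1 : (fun t : ℝ => Real.sqrt ((y+t)^2 + x^2)) = fun t : ℝ => Real.sqrt (x^2 + (y+t)^2) := by
    funext t; rw [add_comm]
  have e2 : Real.sqrt (y^2+x^2) = Real.sqrt (x^2+y^2) := by rw [add_comm]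
  rw [e1, e2] at this
  exact this

lemma curveG (g : ℝ → ℝ) (hgd : Differentiable ℝ g) (x y : ℝ) (h : x^2+y^2 ≠ 0) :
    HasDerivAt (fun t : ℝ => g (Real.sqrt ((x+t)^2+y^2)))
      (deriv g (Real.sqrt (x^2+y^2)) * (x / Real.sqrt (x^2+y^2))) 0 := by
  have hpt : Real.sqrt ((x+0)^2+y^2) = Real.sqrt (x^2+y^2) := by norm_num
  have hD : HasDerivAt g (deriv g (Real.sqrt (x^2+y^2))) (Real.sqrt ((x+0)^2+y^2)) := by
    rw [hpt]; exact (hgd _).hasDerivAt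
  have := hD.comp 0 (curveR x y h)
  simpa [Function.comp_def] using this

lemma curveG2 (g : ℝ → ℝ) (hgd : Differentiable ℝ g) (x y : ℝ) (h : x^2+y^2 ≠ 0) :
    HasDerivAt (fun t : ℝ => g (Real.sqrt (x^2+(y+t)^2)))
      (deriv g (Real.sqrt (x^2+y^2)) * (y / Real.sqrt (x^2+y^2))) 0 := by
  have hpt : Real.sqrt (x^2+(y+0)^2) = Real.sqrt (x^2+y^2) := by norm_num
  have hD : HasDerivAt g (deriv g (Real.sqrt (x^2+y^2))) (Real.sqrt (x^2+(y+0)^2)) := by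
    rw [hpt]; exact (hgd _).hasDerivAt
  have := hD.comp 0 (curveR2 x y h)
  simpa [Function.comp_def] using this

lemma diff_n (q : ℝ×ℝ×ℝ) (hq : q.1^2+q.2.1^2 ≠ 0) :
    DifferentiableAt ℝ (fun q : ℝ×ℝ×ℝ => Real.sqrt (q.1^2+q.2.1^2)) q :=
  DifferentiableAt.sqrt (by fun_prop) hq

lemma X1f_formula (g : ℝ → ℝ) (hgd : Differentiable ℝ g) (q : ℝ×ℝ×ℝ) (hq : q.1^2+q.2.1^2 ≠ 0) :
    fderiv ℝ (fun p : ℝ×ℝ×ℝ => p.2.2 - g (Real.sqrt (p.1^2+p.2.1^2))) q ((1:ℝ), (0:ℝ), q.2.1/2)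
      = q.2.1/2 - deriv g (Real.sqrt (q.1^2+q.2.1^2)) * q.1 / Real.sqrt (q.1^2+q.2.1^2) := by
  have hdiff : DifferentiableAt ℝ (fun p : ℝ×ℝ×ℝ => p.2.2 - g (Real.sqrt (p.1^2+p.2.1^2))) q := by
    exact DifferentiableAt.sub (by fun_prop) ((hgd.differentiableAt).comp q (diff_n q hq))
  rw [fderiv_apply_line _ _ _ hdiff]
  have hcurve : (fun t : ℝ => (fun p : ℝ×ℝ×ℝ => p.2.2 - g (Real.sqrt (p.1^2+p.2.1^2)))
      (q + t • ((1:ℝ), (0:ℝ), q.2.1/2)))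
      = fun t : ℝ => (q.2.2 + t * (q.2.1/2)) - g (Real.sqrt ((q.1 + t)^2 + q.2.1^2)) := by
    funext t
    simp [Prod.smul_def, smul_eq_mul]
  rw [hcurve]
  have hlin : HasDerivAt (fun t : ℝ => q.2.2 + t * (q.2.1/2)) (q.2.1/2) 0 := by
    simpa using ((hasDerivAt_id (0:ℝ)).mul_const (q.2.1/2)).const_add q.2.2
  have h := hlin.sub (curveG g hgd q.1 q.2.1 hq)
  simp only [Pi.sub_def] at h
  rw [h.deriv]; ring

lemma X2f_formula (g : ℝ → ℝ) (hgd : Differentiable ℝ g) (q : ℝ×ℝ×ℝ) (hq : q.1^2+q.2.1^2 ≠ 0) :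
    fderiv ℝ (fun p : ℝ×ℝ×ℝ => p.2.2 - g (Real.sqrt (p.1^2+p.2.1^2))) q ((0:ℝ), (1:ℝ), -(q.1/2))
      = -(q.1/2) - deriv g (Real.sqrt (q.1^2+q.2.1^2)) * q.2.1 / Real.sqrt (q.1^2+q.2.1^2) := by
  have hdiff : DifferentiableAt ℝ (fun p : ℝ×ℝ×ℝ => p.2.2 - g (Real.sqrt (p.1^2+p.2.1^2))) q := by
    exact DifferentiableAt.sub (by fun_prop) ((hgd.differentiableAt).comp q (diff_n q hq))
  rw [fderiv_apply_line _ _ _ hdiff]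
  have hcurve : (fun t : ℝ => (fun p : ℝ×ℝ×ℝ => p.2.2 - g (Real.sqrt (p.1^2+p.2.1^2)))
      (q + t • ((0:ℝ), (1:ℝ), -(q.1/2))))
      = fun t : ℝ => (q.2.2 + t * (-(q.1/2))) - g (Real.sqrt (q.1^2 + (q.2.1 + t)^2)) := by
    funext t
    simp [Prod.smul_def, smul_eq_mul]
  rw [hcurve]
  have hlin : HasDerivAt (fun t : ℝ => q.2.2 + t * (-(q.1/2))) (-(q.1/2)) 0 := by
    simpa using ((hasDerivAt_id (0:ℝ)).mul_const (-(q.1/2))).const_add q.2.2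
  have h := hlin.sub (curveG2 g hgd q.1 q.2.1 hq)
  simp only [Pi.sub_def] at h
  rw [h.deriv]; ring

-- second derivative lemma along X1 for F1
lemma V1_formula (g : ℝ → ℝ) (hgd : Differentiable ℝ g) (hgd' : Differentiable ℝ (deriv g))
    (p : ℝ×ℝ×ℝ) (hp : 0 < p.1^2+p.2.1^2) :
    fderiv ℝ (fun q : ℝ×ℝ×ℝ =>
        q.2.1/2 - deriv g (Real.sqrt (q.1^2+q.2.1^2)) * q.1 / Real.sqrt (q.1^2+q.2.1^2))
      p ((1:ℝ), (0:ℝ), p.2.1/2)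
    = -(deriv (deriv g) (Real.sqrt (p.1^2+p.2.1^2)) * p.1^2 / (Real.sqrt (p.1^2+p.2.1^2))^2
        + deriv g (Real.sqrt (p.1^2+p.2.1^2)) * ((Real.sqrt (p.1^2+p.2.1^2))^2 - p.1^2)
          / (Real.sqrt (p.1^2+p.2.1^2))^3) := by
  set x := p.1 with hx
  set y := p.2.1 with hy
  have hne : x^2 + y^2 ≠ 0 := ne_of_gt hp
  have hr0 : (0:ℝ) < Real.sqrt (x^2+y^2) := Real.sqrt_pos.mpr hp
  have hdiff : DifferentiableAt ℝ (fun q : ℝ×ℝ×ℝ =>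
      q.2.1/2 - deriv g (Real.sqrt (q.1^2+q.2.1^2)) * q.1 / Real.sqrt (q.1^2+q.2.1^2)) p := by
    have h1 : DifferentiableAt ℝ (fun q : ℝ×ℝ×ℝ =>
        deriv g (Real.sqrt (q.1^2+q.2.1^2)) * q.1) p :=
      ((hgd'.differentiableAt).comp p (diff_n p hne)).mul (by fun_prop)
    refine DifferentiableAt.sub (by fun_prop) ?_
    simp only [div_eq_mul_inv]
    exact h1.mul ((diff_n p hne).inv hr0.ne')
  rw [fderiv_apply_line _ _ _ hdiff]
  have hcurve : (fun t : ℝ => (fun q : ℝ×ℝ×ℝ =>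
        q.2.1/2 - deriv g (Real.sqrt (q.1^2+q.2.1^2)) * q.1 / Real.sqrt (q.1^2+q.2.1^2))
        (p + t • ((1:ℝ), (0:ℝ), p.2.1/2)))
      = fun t : ℝ => y/2 - deriv g (Real.sqrt ((x+t)^2+y^2)) * (x+t) / Real.sqrt ((x+t)^2+y^2) := by
    funext t
    simp [Prod.smul_def, smul_eq_mul, ← hx, ← hy]
  rw [hcurve]
  have hA := curveG (deriv g) hgd' x y hne
  have hid : HasDerivAt (fun t : ℝ => x + t) 1 0 := by
    simpa using (hasDerivAt_id (0:ℝ)).const_add x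
  have hnum := hA.mul hid
  have hq := hnum.div (curveR x y hne) (by simpa using hr0.ne')
  simp only [add_zero, Pi.mul_def, Pi.div_def] at hq
  have h := hq.const_sub (y/2)
  rw [h.deriv]
  have hrne : Real.sqrt (x^2+y^2) ≠ 0 := hr0.ne'
  set rr := Real.sqrt (x^2+y^2) with hrr
  field_simp
  ring

lemma V2_formula (g : ℝ → ℝ) (hgd : Differentiable ℝ g) (hgd' : Differentiable ℝ (deriv g))
    (p : ℝ×ℝ×ℝ) (hp : 0 < p.1^2+p.2.1^2) :
    fderiv ℝ (fun q : ℝ×ℝ×ℝ =>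
        -(q.1/2) - deriv g (Real.sqrt (q.1^2+q.2.1^2)) * q.2.1 / Real.sqrt (q.1^2+q.2.1^2))
      p ((0:ℝ), (1:ℝ), -(p.1/2))
    = -(deriv (deriv g) (Real.sqrt (p.1^2+p.2.1^2)) * p.2.1^2 / (Real.sqrt (p.1^2+p.2.1^2))^2
        + deriv g (Real.sqrt (p.1^2+p.2.1^2)) * ((Real.sqrt (p.1^2+p.2.1^2))^2 - p.2.1^2)
          / (Real.sqrt (p.1^2+p.2.1^2))^3) := by
  set x := p.1 with hx
  set y := p.2.1 with hy
  have hne : x^2 + y^2 ≠ 0 := ne_of_gt hp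
  have hr0 : (0:ℝ) < Real.sqrt (x^2+y^2) := Real.sqrt_pos.mpr hp
  have hdiff : DifferentiableAt ℝ (fun q : ℝ×ℝ×ℝ =>
      -(q.1/2) - deriv g (Real.sqrt (q.1^2+q.2.1^2)) * q.2.1 / Real.sqrt (q.1^2+q.2.1^2)) p := by
    have h1 : DifferentiableAt ℝ (fun q : ℝ×ℝ×ℝ =>
        deriv g (Real.sqrt (q.1^2+q.2.1^2)) * q.2.1) p :=
      ((hgd'.differentiableAt).comp p (diff_n p hne)).mul (by fun_prop)
    refine DifferentiableAt.sub (by fun_prop) ?_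
    simp only [div_eq_mul_inv]
    exact h1.mul ((diff_n p hne).inv hr0.ne')
  rw [fderiv_apply_line _ _ _ hdiff]
  have hcurve : (fun t : ℝ => (fun q : ℝ×ℝ×ℝ =>
        -(q.1/2) - deriv g (Real.sqrt (q.1^2+q.2.1^2)) * q.2.1 / Real.sqrt (q.1^2+q.2.1^2))
        (p + t • ((0:ℝ), (1:ℝ), -(p.1/2))))
      = fun t : ℝ => -(x/2) - deriv g (Real.sqrt (x^2+(y+t)^2)) * (y+t) / Real.sqrt (x^2+(y+t)^2) := by
    funext t
    simp [Prod.smul_def, smul_eq_mul, ← hx, ← hy]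
  rw [hcurve]
  have hA := curveG2 (deriv g) hgd' x y hne
  have hid : HasDerivAt (fun t : ℝ => y + t) 1 0 := by
    simpa using (hasDerivAt_id (0:ℝ)).const_add y
  have hnum := hA.mul hid
  have hq := hnum.div (curveR2 x y hne) (by simpa using hr0.ne')
  simp only [add_zero, Pi.mul_def, Pi.div_def] at hq
  have h := hq.const_sub (-(x/2))
  rw [h.deriv]
  have hrne : Real.sqrt (x^2+y^2) ≠ 0 := hr0.ne'
  set rr := Real.sqrt (x^2+y^2) with hrr
  field_simp
  ring

lemma E1_formula (g : ℝ → ℝ) (hgd : Differentiable ℝ g) (hgd' : Differentiable ℝ (deriv g))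
    (p : ℝ×ℝ×ℝ) (hp : 0 < p.1^2+p.2.1^2) :
    fderiv ℝ (fun q : ℝ×ℝ×ℝ =>
        (Real.sqrt ((q.1^2+q.2.1^2)/4 + (deriv g (Real.sqrt (q.1^2+q.2.1^2)))^2))⁻¹)
      p ((1:ℝ), (0:ℝ), p.2.1/2)
    = -(p.1/2 + 2 * deriv g (Real.sqrt (p.1^2+p.2.1^2)) * deriv (deriv g) (Real.sqrt (p.1^2+p.2.1^2))
          * p.1 / Real.sqrt (p.1^2+p.2.1^2))
        / (2 * (Real.sqrt ((p.1^2+p.2.1^2)/4 + (deriv g (Real.sqrt (p.1^2+p.2.1^2)))^2))^3) := by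
  set x := p.1 with hx
  set y := p.2.1 with hy
  have hne : x^2 + y^2 ≠ 0 := ne_of_gt hp
  have hr0 : (0:ℝ) < Real.sqrt (x^2+y^2) := Real.sqrt_pos.mpr hp
  have hS0 : (0:ℝ) < (x^2+y^2)/4 + (deriv g (Real.sqrt (x^2+y^2)))^2 :=
    add_pos_of_pos_of_nonneg (by positivity) (sq_nonneg _)
  have hT0 : (0:ℝ) < Real.sqrt ((x^2+y^2)/4 + (deriv g (Real.sqrt (x^2+y^2)))^2) :=
    Real.sqrt_pos.mpr hS0
  have hdiff : DifferentiableAt ℝ (fun q : ℝ×ℝ×ℝ =>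
      (Real.sqrt ((q.1^2+q.2.1^2)/4 + (deriv g (Real.sqrt (q.1^2+q.2.1^2)))^2))⁻¹) p := by
    have hinner : DifferentiableAt ℝ (fun q : ℝ×ℝ×ℝ =>
        (q.1^2+q.2.1^2)/4 + (deriv g (Real.sqrt (q.1^2+q.2.1^2)))^2) p :=
      DifferentiableAt.add (by fun_prop) (((hgd'.differentiableAt).comp p (diff_n p hne)).pow 2)
    exact (hinner.sqrt hS0.ne').inv hT0.ne'
  rw [fderiv_apply_line _ _ _ hdiff]
  have hcurve : (fun t : ℝ => (fun q : ℝ×ℝ×ℝ =>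
        (Real.sqrt ((q.1^2+q.2.1^2)/4 + (deriv g (Real.sqrt (q.1^2+q.2.1^2)))^2))⁻¹)
        (p + t • ((1:ℝ), (0:ℝ), p.2.1/2)))
      = fun t : ℝ => (Real.sqrt (((x+t)^2+y^2)/4 + (deriv g (Real.sqrt ((x+t)^2+y^2)))^2))⁻¹ := by
    funext t
    simp [Prod.smul_def, smul_eq_mul, ← hx, ← hy]
  rw [hcurve]
  have hW : HasDerivAt (fun t : ℝ => ((x+t)^2+y^2)/4) (2*x/4) 0 := by
    have h1 : HasDerivAt (fun t : ℝ => (x + t)^2 + y^2) (2*x) 0 := by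
      have := (((hasDerivAt_id (0:ℝ)).const_add x).pow 2).add_const (y^2)
      simpa using this
    exact h1.div_const 4
  have hA := curveG (deriv g) hgd' x y hne
  have hA2 := hA.pow 2
  have hS := hW.add hA2
  have hSne : ((x+0)^2+y^2)/4 + (deriv g (Real.sqrt ((x+0)^2+y^2)))^2 ≠ 0 := by
    simpa using hS0.ne'
  have hsqrt := (Real.hasDerivAt_sqrt hSne).comp 0 hS
  simp only [Function.comp_def, add_zero, Pi.add_def, Pi.pow_def] at hsqrt
  have hinv := hsqrt.inv (by simpa using hT0.ne')
  simp only [add_zero, Pi.inv_def] at hinv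
  rw [hinv.deriv]
  set n := Real.sqrt (x^2+y^2) with hn
  set T := Real.sqrt ((x^2+y^2)/4 + (deriv g n)^2) with hT
  have hnne : n ≠ 0 := hr0.ne'
  have hTne : T ≠ 0 := hT0.ne'
  push_cast
  field_simp
  ring

lemma E2_formula (g : ℝ → ℝ) (hgd : Differentiable ℝ g) (hgd' : Differentiable ℝ (deriv g))
    (p : ℝ×ℝ×ℝ) (hp : 0 < p.1^2+p.2.1^2) :
    fderiv ℝ (fun q : ℝ×ℝ×ℝ =>
        (Real.sqrt ((q.1^2+q.2.1^2)/4 + (deriv g (Real.sqrt (q.1^2+q.2.1^2)))^2))⁻¹)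
      p ((0:ℝ), (1:ℝ), -(p.1/2))
    = -(p.2.1/2 + 2 * deriv g (Real.sqrt (p.1^2+p.2.1^2)) * deriv (deriv g) (Real.sqrt (p.1^2+p.2.1^2))
          * p.2.1 / Real.sqrt (p.1^2+p.2.1^2))
        / (2 * (Real.sqrt ((p.1^2+p.2.1^2)/4 + (deriv g (Real.sqrt (p.1^2+p.2.1^2)))^2))^3) := by
  set x := p.1 with hx
  set y := p.2.1 with hy
  have hne : x^2 + y^2 ≠ 0 := ne_of_gt hp
  have hr0 : (0:ℝ) < Real.sqrt (x^2+y^2) := Real.sqrt_pos.mpr hp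
  have hS0 : (0:ℝ) < (x^2+y^2)/4 + (deriv g (Real.sqrt (x^2+y^2)))^2 :=
    add_pos_of_pos_of_nonneg (by positivity) (sq_nonneg _)
  have hT0 : (0:ℝ) < Real.sqrt ((x^2+y^2)/4 + (deriv g (Real.sqrt (x^2+y^2)))^2) :=
    Real.sqrt_pos.mpr hS0
  have hdiff : DifferentiableAt ℝ (fun q : ℝ×ℝ×ℝ =>
      (Real.sqrt ((q.1^2+q.2.1^2)/4 + (deriv g (Real.sqrt (q.1^2+q.2.1^2)))^2))⁻¹) p := by
    have hinner : DifferentiableAt ℝ (fun q : ℝ×ℝ×ℝ =>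
        (q.1^2+q.2.1^2)/4 + (deriv g (Real.sqrt (q.1^2+q.2.1^2)))^2) p :=
      DifferentiableAt.add (by fun_prop) (((hgd'.differentiableAt).comp p (diff_n p hne)).pow 2)
    exact (hinner.sqrt hS0.ne').inv hT0.ne'
  rw [fderiv_apply_line _ _ _ hdiff]
  have hcurve : (fun t : ℝ => (fun q : ℝ×ℝ×ℝ =>
        (Real.sqrt ((q.1^2+q.2.1^2)/4 + (deriv g (Real.sqrt (q.1^2+q.2.1^2)))^2))⁻¹)
        (p + t • ((0:ℝ), (1:ℝ), -(p.1/2))))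
      = fun t : ℝ => (Real.sqrt ((x^2+(y+t)^2)/4 + (deriv g (Real.sqrt (x^2+(y+t)^2)))^2))⁻¹ := by
    funext t
    simp [Prod.smul_def, smul_eq_mul, ← hx, ← hy]
  rw [hcurve]
  have hW : HasDerivAt (fun t : ℝ => (x^2+(y+t)^2)/4) (2*y/4) 0 := by
    have h1 : HasDerivAt (fun t : ℝ => x^2 + (y + t)^2) (2*y) 0 := by
      have := ((((hasDerivAt_id (0:ℝ)).const_add y).pow 2)).const_add (x^2)
      simpa using this
    exact h1.div_const 4
  have hA := curveG2 (deriv g) hgd' x y hne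
  have hA2 := hA.pow 2
  have hS := hW.add hA2
  have hSne : (x^2+(y+0)^2)/4 + (deriv g (Real.sqrt (x^2+(y+0)^2)))^2 ≠ 0 := by
    simpa using hS0.ne'
  have hsqrt := (Real.hasDerivAt_sqrt hSne).comp 0 hS
  simp only [Function.comp_def, add_zero, Pi.add_def, Pi.pow_def] at hsqrt
  have hinv := hsqrt.inv (by simpa using hT0.ne')
  simp only [add_zero, Pi.inv_def] at hinv
  rw [hinv.deriv]
  set n := Real.sqrt (x^2+y^2) with hn
  set T := Real.sqrt ((x^2+y^2)/4 + (deriv g n)^2) with hT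
  have hnne : n ≠ 0 := hr0.ne'
  have hTne : T ≠ 0 := hT0.ne'
  push_cast
  field_simp
  ring

lemma msq_aux (x y a n : ℝ) (hn : n ≠ 0) (h2 : n^2 = x^2+y^2) :
    (y/2 - a*x/n)^2 + (-(x/2) - a*y/n)^2 = (x^2+y^2)/4 + a^2 := by
  field_simp
  linear_combination (-16*a^2) * h2

lemma sqrt_quarter (c : ℝ) (hc : 0 ≤ c) :
    Real.sqrt (c/4) = Real.sqrt c / 2 := by
  rw [show c/4 = c * (1/2)^2 by ring, Real.sqrt_mul hc, Real.sqrt_sq (by norm_num : (0:ℝ) ≤ 1/2)]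
  ring

theorem rotational_surface_heisenberg_mean_curvature
    (g : ℝ → ℝ) (hg : ContDiff ℝ (⊤ : ℕ∞) g)
    (X1 X2 : ℝ × ℝ × ℝ → ℝ × ℝ × ℝ)
    (hX1 : X1 = fun p => (1, 0, p.2.1 / 2))
    (hX2 : X2 = fun p => (0, 1, -(p.1 / 2)))
    (f : ℝ × ℝ × ℝ → ℝ)
    (hf : f = fun p => p.2.2 - g (Real.sqrt (p.1 ^ 2 + p.2.1 ^ 2)))
    (X1f X2f m : ℝ × ℝ × ℝ → ℝ)
    (hX1f : X1f = fun q => fderiv ℝ f q (X1 q))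
    (hX2f : X2f = fun q => fderiv ℝ f q (X2 q))
    (hm : m = fun q => Real.sqrt ((X1f q) ^ 2 + (X2f q) ^ 2))
    (p : ℝ × ℝ × ℝ) (hp : (p.1, p.2.1) ≠ ((0 : ℝ), (0 : ℝ)))
    (r : ℝ) (hr : r = Real.sqrt (p.1 ^ 2 + p.2.1 ^ 2)) :
    X1f p = p.2.1 / 2 - deriv g r * p.1 / r ∧
    X2f p = -(p.1 / 2) - deriv g r * p.2.1 / r ∧
    m p = Real.sqrt (r ^ 2 + 4 * (deriv g r) ^ 2) / 2 ∧
    0 < m p ∧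
    (fderiv ℝ X1f p (X1 p) + fderiv ℝ X2f p (X2 p)) / m p
        + X1f p * fderiv ℝ (fun q => 1 / m q) p (X1 p)
        + X2f p * fderiv ℝ (fun q => 1 / m q) p (X2 p)
      = -2 * (4 * (deriv g r) ^ 3 + r ^ 3 * deriv (deriv g) r)
          / (r * (r ^ 2 + 4 * (deriv g r) ^ 2) ^ ((3 : ℝ) / 2)) := by
  have hgd : Differentiable ℝ g := (contDiff_infty_iff_deriv.mp hg).1
  have hgd' : Differentiable ℝ (deriv g) :=
    (contDiff_infty_iff_deriv.mp (contDiff_infty_iff_deriv.mp hg).2).1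
  have hp2 : (0:ℝ) < p.1^2 + p.2.1^2 := by
    rcases eq_or_ne p.1 0 with h1 | h1
    · rcases eq_or_ne p.2.1 0 with h2 | h2
      · exact absurd (by rw [h1, h2] : (p.1, p.2.1) = ((0:ℝ), (0:ℝ))) hp
      · positivity
    · positivity
  have hr0 : (0:ℝ) < r := hr ▸ Real.sqrt_pos.mpr hp2
  have hr2 : r^2 = p.1^2 + p.2.1^2 := by rw [hr]; exact Real.sq_sqrt hp2.le
  -- first derivatives
  have hv1 : X1f p = p.2.1 / 2 - deriv g r * p.1 / r := by
    rw [hr, hX1f, hf, hX1]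
    exact X1f_formula g hgd p hp2.ne'
  have hv2 : X2f p = -(p.1 / 2) - deriv g r * p.2.1 / r := by
    rw [hr, hX2f, hf, hX2]
    exact X2f_formula g hgd p hp2.ne'
  -- m at p
  have hsum : (X1f p)^2 + (X2f p)^2 = (p.1^2+p.2.1^2)/4 + (deriv g r)^2 := by
    rw [hv1, hv2]
    exact msq_aux p.1 p.2.1 (deriv g r) r hr0.ne' hr2
  have hK0 : (0:ℝ) < Real.sqrt (r^2 + 4*(deriv g r)^2) := by
    apply Real.sqrt_pos.mpr
    have := pow_pos hr0 2
    nlinarith [sq_nonneg (deriv g r)]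
  have hmp : m p = Real.sqrt (r^2 + 4*(deriv g r)^2) / 2 := by
    rw [hm]
    show Real.sqrt ((X1f p)^2 + (X2f p)^2) = _
    rw [hsum, show (p.1^2+p.2.1^2)/4 + (deriv g r)^2 = (r^2 + 4*(deriv g r)^2)/4 by
      rw [← hr2]; ring]
    exact sqrt_quarter _ (by positivity)
  have hmp0 : 0 < m p := by rw [hmp]; positivity
  refine ⟨hv1, hv2, hmp, hmp0, ?_⟩
  -- neighborhood membership
  have hmem : {q : ℝ×ℝ×ℝ | q.1^2 + q.2.1^2 ≠ 0} ∈ nhds p := by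
    have hc : ContinuousAt (fun q : ℝ×ℝ×ℝ => q.1^2 + q.2.1^2) p := by fun_prop
    exact hc.preimage_mem_nhds (isOpen_ne.mem_nhds hp2.ne')
  -- eventual equalities
  have hEV1 : X1f =ᶠ[nhds p] (fun q : ℝ×ℝ×ℝ =>
      q.2.1/2 - deriv g (Real.sqrt (q.1^2+q.2.1^2)) * q.1 / Real.sqrt (q.1^2+q.2.1^2)) := by
    refine Filter.eventuallyEq_of_mem hmem (fun q hq => ?_)
    simp only [hX1f, hf, hX1]
    exact X1f_formula g hgd q hq
  have hEV2 : X2f =ᶠ[nhds p] (fun q : ℝ×ℝ×ℝ =>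
      -(q.1/2) - deriv g (Real.sqrt (q.1^2+q.2.1^2)) * q.2.1 / Real.sqrt (q.1^2+q.2.1^2)) := by
    refine Filter.eventuallyEq_of_mem hmem (fun q hq => ?_)
    simp only [hX2f, hf, hX2]
    exact X2f_formula g hgd q hq
  have hEVm : (fun q => 1 / m q) =ᶠ[nhds p] (fun q : ℝ×ℝ×ℝ =>
      (Real.sqrt ((q.1^2+q.2.1^2)/4 + (deriv g (Real.sqrt (q.1^2+q.2.1^2)))^2))⁻¹) := by
    refine Filter.eventuallyEq_of_mem hmem (fun q hq => ?_)
    have hq0 : (0:ℝ) < q.1^2 + q.2.1^2 := lt_of_le_of_ne (by positivity) (Ne.symm hq)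
    have hn0 : (0:ℝ) < Real.sqrt (q.1^2+q.2.1^2) := Real.sqrt_pos.mpr hq0
    have hn2 : (Real.sqrt (q.1^2+q.2.1^2))^2 = q.1^2 + q.2.1^2 := Real.sq_sqrt hq0.le
    have hq1 : X1f q = q.2.1/2 - deriv g (Real.sqrt (q.1^2+q.2.1^2)) * q.1 / Real.sqrt (q.1^2+q.2.1^2) := by
      simp only [hX1f, hf, hX1]; exact X1f_formula g hgd q hq
    have hq2 : X2f q = -(q.1/2) - deriv g (Real.sqrt (q.1^2+q.2.1^2)) * q.2.1 / Real.sqrt (q.1^2+q.2.1^2) := by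
      simp only [hX2f, hf, hX2]; exact X2f_formula g hgd q hq
    have : m q = Real.sqrt ((q.1^2+q.2.1^2)/4 + (deriv g (Real.sqrt (q.1^2+q.2.1^2)))^2) := by
      rw [hm]
      show Real.sqrt ((X1f q)^2 + (X2f q)^2) = _
      rw [hq1, hq2, msq_aux q.1 q.2.1 (deriv g (Real.sqrt (q.1^2+q.2.1^2))) (Real.sqrt (q.1^2+q.2.1^2)) hn0.ne' hn2]
    show 1 / m q = _
    rw [this, one_div]
  -- second derivatives
  have hd1 : fderiv ℝ X1f p (X1 p)
      = -(deriv (deriv g) r * p.1^2 / r^2 + deriv g r * (r^2 - p.1^2) / r^3) := by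
    rw [hEV1.fderiv_eq, hX1, hr]
    exact V1_formula g hgd hgd' p hp2
  have hd2 : fderiv ℝ X2f p (X2 p)
      = -(deriv (deriv g) r * p.2.1^2 / r^2 + deriv g r * (r^2 - p.2.1^2) / r^3) := by
    rw [hEV2.fderiv_eq, hX2, hr]
    exact V2_formula g hgd hgd' p hp2
  have hTval : Real.sqrt ((p.1^2+p.2.1^2)/4 + (deriv g r)^2)
      = Real.sqrt (r^2 + 4*(deriv g r)^2) / 2 := by
    rw [show (p.1^2+p.2.1^2)/4 + (deriv g r)^2 = (r^2 + 4*(deriv g r)^2)/4 by rw [← hr2]; ring]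
    exact sqrt_quarter _ (by positivity)
  have he1 : fderiv ℝ (fun q => 1 / m q) p (X1 p)
      = -(p.1/2 + 2 * deriv g r * deriv (deriv g) r * p.1 / r)
        / (2 * (Real.sqrt (r^2 + 4*(deriv g r)^2) / 2)^3) := by
    rw [hEVm.fderiv_eq, hX1, ← hTval, hr]
    exact E1_formula g hgd hgd' p hp2
  have he2 : fderiv ℝ (fun q => 1 / m q) p (X2 p)
      = -(p.2.1/2 + 2 * deriv g r * deriv (deriv g) r * p.2.1 / r)
        / (2 * (Real.sqrt (r^2 + 4*(deriv g r)^2) / 2)^3) := by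
    rw [hEVm.fderiv_eq, hX2, ← hTval, hr]
    exact E2_formula g hgd hgd' p hp2
  -- final algebra
  rw [hd1, hd2, he1, he2, hv1, hv2, hmp]
  have hKnn : (0:ℝ) ≤ r^2 + 4*(deriv g r)^2 := by positivity
  have hpow : (r^2 + 4*(deriv g r)^2) ^ ((3:ℝ)/2) = (Real.sqrt (r^2 + 4*(deriv g r)^2))^3 := by
    rw [show ((3:ℝ)/2) = ((1:ℝ)/2) * (3:ℕ) by norm_num, Real.rpow_mul hKnn,
      Real.rpow_natCast, ← Real.sqrt_eq_rpow]
  rw [show r ^ 2 + 4 * (deriv g r) ^ 2 = r^2 + 4*(deriv g r)^2 from rfl, hpow]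
  set a := deriv g r
  set b := deriv (deriv g) r
  set K := Real.sqrt (r^2 + 4*a^2) with hK
  have hK2 : K^2 = r^2 + 4*a^2 := Real.sq_sqrt hKnn
  have hxy : p.1^2 + p.2.1^2 = r^2 := hr2.symm
  set x := p.1
  set y := p.2.1
  have hKne : K ≠ 0 := hK0.ne'
  have hrne : r ≠ 0 := hr0.ne'
  field_simp
  linear_combination (b*r*(8*a^2 - 2*K^2) + 2*a*r^2 + 2*a*K^2) * hxy
    + (-2*b*r^3 - 2*a*r^2) * hK2
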